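/- arXiv:2002.12174 — 5 statements merged into one kernel-verified Lean document; each statement's English description precedes it below -/
import Mathlib

section
/- For every integer N ≥ 1, the weights satisfy ∑_{i=1}^{N} η_N^i / √i ≥ 1/√N. -/
/-- Learning rate `η_j = (H+1)/(H+j)` and weights
`η_N^0 = ∏_{j=1}^N (1-η_j)`, `η_N^i = η_i · ∏_{j=i+1}^N (1-η_j)` (1 ≤ i ≤ N)
of the UCB-H/OPIQ Q-learning update. -/
noncomputable def etaWeight (H N i : ℕ) : ℝ :=
  (if i = 0 then 1 else ((H : ℝ) + 1) / ((H : ℝ) + i)) *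
    ∏ j ∈ Finset.Icc (i + 1) N, (1 - ((H : ℝ) + 1) / ((H : ℝ) + j))

lemma telescope (a : ℕ → ℝ) (N : ℕ) :
    ∑ i ∈ Finset.Icc 1 N, a i * ∏ j ∈ Finset.Icc (i+1) N, (1 - a j)
      = 1 - ∏ j ∈ Finset.Icc 1 N, (1 - a j) := by
  induction N with
  | zero => simp
  | succ N ih =>
    rw [Finset.sum_Icc_succ_top (Nat.succ_le_succ (Nat.zero_le N)),
      Finset.prod_Icc_succ_top (Nat.succ_le_succ (Nat.zero_le N))]
    have h : ∀ i ∈ Finset.Icc 1 N,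
        a i * ∏ j ∈ Finset.Icc (i+1) (N+1), (1 - a j)
          = (a i * ∏ j ∈ Finset.Icc (i+1) N, (1 - a j)) * (1 - a (N+1)) := by
      intro i hi
      simp only [Finset.mem_Icc] at hi
      rw [Finset.prod_Icc_succ_top (by omega : i+1 ≤ N+1)]; ring
    rw [Finset.sum_congr rfl h, ← Finset.sum_mul, ih]
    have : Finset.Icc (N+1+1) (N+1) = ∅ := Finset.Icc_eq_empty (by omega)
    rw [this]
    simp; ring

lemma etaWeight_sum_eq_one (H : ℕ) (N : ℕ) (hN : 1 ≤ N) :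
    ∑ i ∈ Finset.Icc 1 N, etaWeight H N i = 1 := by
  have h : ∀ i ∈ Finset.Icc 1 N, etaWeight H N i
      = ((H : ℝ) + 1) / ((H : ℝ) + i) * ∏ j ∈ Finset.Icc (i+1) N, (1 - ((H : ℝ) + 1) / ((H : ℝ) + j)) := by
    intro i hi
    have : i ≠ 0 := by simp at hi; omega
    simp [etaWeight, this]
  rw [Finset.sum_congr rfl h, telescope (fun j => ((H : ℝ) + 1) / ((H : ℝ) + j)) N]
  have h1 : (1 : ℕ) ∈ Finset.Icc 1 N := by simp [hN]
  have hz : (1 - ((H : ℝ) + 1) / ((H : ℝ) + (1:ℕ))) = 0 := by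
    push_cast
    rw [div_self (by positivity)]
    ring
  rw [Finset.prod_eq_zero h1 hz]
  ring

lemma etaWeight_nonneg (H N i : ℕ) : 0 ≤ etaWeight H N i := by
  unfold etaWeight
  apply mul_nonneg
  · split
    · norm_num
    · positivity
  · apply Finset.prod_nonneg
    intro j hj
    simp only [Finset.mem_Icc] at hj
    have hj1 : 1 ≤ j := by omega
    have : ((H : ℝ) + 1) / ((H : ℝ) + j) ≤ 1 := by
      rw [div_le_one (by positivity)]
      have : (1 : ℝ) ≤ (j : ℝ) := by exact_mod_cast hj1
      linarith
    linarith

/-- Lemma 1(a), lower half: `∑_{i=1}^N η_N^i / √i ≥ 1/√N`. -/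
theorem etaWeight_sum_div_sqrt_ge (H : ℕ) (hH : 1 ≤ H) (N : ℕ) (hN : 1 ≤ N) :
    1 / Real.sqrt N ≤ ∑ i ∈ Finset.Icc 1 N, etaWeight H N i / Real.sqrt i := by
  have hsum := etaWeight_sum_eq_one H N hN
  have key : ∑ i ∈ Finset.Icc 1 N, etaWeight H N i / Real.sqrt N
      ≤ ∑ i ∈ Finset.Icc 1 N, etaWeight H N i / Real.sqrt i := by
    apply Finset.sum_le_sum
    intro i hi
    simp only [Finset.mem_Icc] at hi
    apply div_le_div_of_nonneg_left (etaWeight_nonneg H N i)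
    · apply Real.sqrt_pos.mpr
      exact_mod_cast Nat.lt_of_lt_of_le Nat.zero_lt_one hi.1
    · apply Real.sqrt_le_sqrt
      exact_mod_cast hi.2
  calc 1 / Real.sqrt N = (∑ i ∈ Finset.Icc 1 N, etaWeight H N i) / Real.sqrt N := by rw [hsum]
    _ = ∑ i ∈ Finset.Icc 1 N, etaWeight H N i / Real.sqrt N := Finset.sum_div _ _ _
    _ ≤ _ := key
end

section
/- For every integer N ≥ 1, the weights satisfy ∑_{i=1}^{N} η_N^i / √i ≤ 2/√N. -/
lemma etaWeight_succ (H n i : ℕ) (hi : i ≤ n) :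
    etaWeight H (n + 1) i
      = etaWeight H n i * (1 - ((H : ℝ) + 1) / ((H : ℝ) + (n + 1 : ℕ))) := by
  unfold etaWeight
  rw [Finset.prod_Icc_succ_top (by omega : i + 1 ≤ n + 1)]
  ring

lemma etaWeight_top (H n : ℕ) :
    etaWeight H (n + 1) (n + 1) = ((H : ℝ) + 1) / ((H : ℝ) + (n + 1 : ℕ)) := by
  unfold etaWeight
  rw [if_neg (by omega), Finset.Icc_eq_empty (by omega), Finset.prod_empty, mul_one]

lemma key_ineq (h : ℝ) (hh : 1 ≤ h) (n : ℕ) (hn : 1 ≤ n) :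
    ((n : ℝ) / (h + n + 1)) * (2 / Real.sqrt n)
      + ((h + 1) / (h + n + 1)) / Real.sqrt ((n : ℝ) + 1) ≤ 2 / Real.sqrt ((n : ℝ) + 1) := by
  have hn1 : (1 : ℝ) ≤ (n : ℝ) := by exact_mod_cast hn
  set s := Real.sqrt n with hs
  set t := Real.sqrt ((n : ℝ) + 1) with ht
  have hs0 : 0 < s := Real.sqrt_pos.2 (by linarith)
  have ht0 : 0 < t := Real.sqrt_pos.2 (by linarith)
  have hs2 : s ^ 2 = n := Real.sq_sqrt (by linarith)
  have ht2 : t ^ 2 = (n : ℝ) + 1 := Real.sq_sqrt (by linarith)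
  have hst : s ≤ t := Real.sqrt_le_sqrt (by linarith)
  have hD : 0 < h + n + 1 := by linarith
  have e1 : ((n : ℝ) / (h + n + 1)) * (2 / s) = ((n : ℝ) * 2) / ((h + n + 1) * s) :=
    div_mul_div_comm _ _ _ _
  have e2 : ((h + 1) / (h + n + 1)) / t = (h + 1) / ((h + n + 1) * t) := div_div _ _ _
  rw [e1, e2, div_add_div _ _ (by positivity) (by positivity),
    div_le_div_iff₀ (by positivity) ht0]
  have hkey : 2 * (n : ℝ) * t + (h + 1) * s ≤ 2 * (h + n + 1) * s := by
    have h1 : 2 * (n : ℝ) * t ≤ 2 * ((n : ℝ) + 1) * s := by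
      nlinarith [mul_nonneg (mul_nonneg hs0.le ht0.le) (sub_nonneg.2 hst)]
    nlinarith
  nlinarith [mul_le_mul_of_nonneg_left (mul_le_mul_of_nonneg_right hkey ht0.le) hD.le,
    mul_pos hD ht0, mul_pos hs0 ht0]

/-- Lemma 1(a), upper half: `∑_{i=1}^N η_N^i / √i ≤ 2/√N`. -/
theorem etaWeight_sum_div_sqrt_le (H : ℕ) (hH : 1 ≤ H) (N : ℕ) (hN : 1 ≤ N) :
    ∑ i ∈ Finset.Icc 1 N, etaWeight H N i / Real.sqrt i ≤ 2 / Real.sqrt N := by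
  induction N with
  | zero => omega
  | succ n ih =>
    rcases Nat.eq_zero_or_pos n with hn | hn
    · subst hn
      simp [etaWeight, Finset.Icc_eq_empty (by omega : ¬ (2:ℕ) ≤ 1)]
      rw [div_self (by positivity : ((H : ℝ) + 1) ≠ 0)]
      norm_num
    · have hS := ih hn
      rw [Finset.sum_Icc_succ_top (by omega : 1 ≤ n + 1)]
      have hre : ∀ i ∈ Finset.Icc 1 n,
          etaWeight H (n + 1) i / Real.sqrt i
            = (1 - ((H : ℝ) + 1) / ((H : ℝ) + (n + 1 : ℕ))) * (etaWeight H n i / Real.sqrt i) := by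
        intro i hi
        rw [etaWeight_succ H n i (Finset.mem_Icc.1 hi).2]
        ring
      rw [Finset.sum_congr rfl hre, ← Finset.mul_sum, etaWeight_top]
      have hc : (1 - ((H : ℝ) + 1) / ((H : ℝ) + (n + 1 : ℕ)))
          = (n : ℝ) / ((H : ℝ) + n + 1) := by
        have hD : ((H : ℝ) + (n + 1 : ℕ)) ≠ 0 := by positivity
        field_simp
        push_cast
        ring
      rw [hc, show ((n + 1 : ℕ) : ℝ) = (n : ℝ) + 1 by push_cast; ring,
        show (H : ℝ) + ((n : ℝ) + 1) = (H : ℝ) + (n : ℝ) + 1 by ring]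
      refine le_trans (add_le_add
        (mul_le_mul_of_nonneg_left hS (by positivity)) le_rfl) ?_
      exact key_ineq (H : ℝ) (by exact_mod_cast hH) n hn
end

section
/- For every integer N ≥ 1 and every integer 1 ≤ i ≤ N, the weight η_N^i satisfies η_N^i ≤ 2H/N; equivalently, max_{1 ≤ i ≤ N} η_N^i ≤ 2H/N. -/
/-- Lemma 1(b), first part: `η_N^i ≤ 2H/N` for all `1 ≤ i ≤ N`. -/
theorem etaWeight_le (H : ℕ) (hH : 1 ≤ H) (N : ℕ) (hN : 1 ≤ N)
    (i : ℕ) (hi1 : 1 ≤ i) (hiN : i ≤ N) :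
    etaWeight H N i ≤ 2 * (H : ℝ) / N := by
  clear hN
  have hHr : (1 : ℝ) ≤ (H : ℝ) := by exact_mod_cast hH
  have hir : (1 : ℝ) ≤ (i : ℝ) := by exact_mod_cast hi1
  induction N, hiN using Nat.le_induction with
  | base =>
    have hie : Finset.Icc (i + 1) i = ∅ := Finset.Icc_eq_empty (by omega)
    have hne : i ≠ 0 := by omega
    rw [etaWeight, hie, if_neg hne, Finset.prod_empty, mul_one]
    rw [div_le_div_iff₀ (by linarith) (by linarith)]
    nlinarith
  | succ N hiN ih =>
    have hNr : (1 : ℝ) ≤ (N : ℝ) := by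
      have : 1 ≤ N := le_trans hi1 hiN
      exact_mod_cast this
    have hd : (0 : ℝ) < (H : ℝ) + (N + 1 : ℕ) := by positivity
    have key : etaWeight H (N + 1) i
        = etaWeight H N i * (1 - ((H : ℝ) + 1) / ((H : ℝ) + (N + 1 : ℕ))) := by
      rw [etaWeight, etaWeight, Finset.prod_Icc_succ_top (by omega)]
      ring
    have hrw : (1 : ℝ) - ((H : ℝ) + 1) / ((H : ℝ) + (N + 1 : ℕ))
        = (N : ℝ) / ((H : ℝ) + (N + 1 : ℕ)) := by
      push_cast
      field_simp
      ring
    have hc : (0 : ℝ) ≤ 1 - ((H : ℝ) + 1) / ((H : ℝ) + (N + 1 : ℕ)) := by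
      rw [hrw]; positivity
    have h1 : etaWeight H (N + 1) i
        ≤ (2 * (H : ℝ) / N) * ((N : ℝ) / ((H : ℝ) + (N + 1 : ℕ))) := by
      rw [key, hrw]
      exact mul_le_mul_of_nonneg_right ih (by positivity)
    refine h1.trans ?_
    push_cast
    rw [div_mul_div_comm, div_le_div_iff₀ (by nlinarith) (by linarith)]
    nlinarith [mul_nonneg (mul_nonneg (by positivity : (0:ℝ) ≤ 2*(H:ℝ)) (by positivity : (0:ℝ) ≤ (N:ℝ))) (by positivity : (0:ℝ) ≤ (H:ℝ))]
end

section
/- For every integer i ≥ 1, the series ∑_{N=i}^{∞} η_N^i converges, and its sum equals 1 + 1/H. -/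
/-- Lemma 1(c): for every `i ≥ 1`, the series `∑_{N=i}^∞ η_N^i` converges
with sum `1 + 1/H` (the sum is indexed as `N = i + n`, `n = 0, 1, 2, …`). -/
theorem etaWeight_hasSum (H : ℕ) (hH : 1 ≤ H) (i : ℕ) (hi : 1 ≤ i) :
    HasSum (fun n : ℕ => etaWeight H (i + n) i) (1 + 1 / (H : ℝ)) := by
  have hHpos : (0:ℝ) < H := by exact_mod_cast hH
  have hH1 : (1:ℝ) ≤ H := by exact_mod_cast hH
  have hipos : (0:ℝ) < i := by exact_mod_cast hi
  have hi1 : (1:ℝ) ≤ i := by exact_mod_cast hi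
  have hHi : (0:ℝ) < (H:ℝ) + i := by linarith
  set p : ℕ → ℝ := fun m => ∏ j ∈ Finset.Icc (i+1) (i+m), (1 - ((H:ℝ)+1)/((H:ℝ)+j))
    with hpdef
  have hfac : ∀ j : ℕ, i + 1 ≤ j → (0:ℝ) ≤ 1 - ((H:ℝ)+1)/((H:ℝ)+j) := by
    intro j hj
    have hj1 : (1:ℝ) ≤ j := by exact_mod_cast le_trans (by omega : 1 ≤ j) le_rfl
    have hpos : (0:ℝ) < (H:ℝ) + j := by linarith
    have : ((H:ℝ)+1)/((H:ℝ)+j) ≤ 1 := by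
      rw [div_le_one hpos]; linarith
    linarith
  have hp0 : ∀ m, 0 ≤ p m := by
    intro m
    apply Finset.prod_nonneg
    intro j hj
    exact hfac j (Finset.mem_Icc.mp hj).1
  have hrec : ∀ m, p (m+1) = p m * (1 - ((H:ℝ)+1)/((H:ℝ)+i+m+1)) := by
    intro m
    have h1 : i + (m+1) = (i+m) + 1 := by omega
    simp only [hpdef, h1]
    rw [Finset.prod_Icc_succ_top (by omega : i + 1 ≤ i + m + 1)]
    congr 1
    push_cast
    ring
  have ha : ∀ n, etaWeight H (i+n) i = ((H:ℝ)+1)/((H:ℝ)+i) * p n := by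
    intro n
    unfold etaWeight
    rw [if_neg (by omega : ¬ i = 0)]
  have hanneg : ∀ n, 0 ≤ etaWeight H (i+n) i := by
    intro n
    rw [ha n]
    exact mul_nonneg (by positivity) (hp0 n)
  have hHne : (H:ℝ) ≠ 0 := ne_of_gt hHpos
  have hHine : (H:ℝ) + i ≠ 0 := ne_of_gt hHi
  have hS : ∀ m, ∑ n ∈ Finset.range m, etaWeight H (i+n) i
      = ((H:ℝ)+1)/H * (1 - p m * ((H:ℝ)+i+m)/((H:ℝ)+i)) := by
    intro m
    induction m with
    | zero =>
      have hp0' : p 0 = 1 := by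
        simp [hpdef]
      simp [hp0']
      field_simp
      simp
    | succ m ih =>
      have hden : (H:ℝ) + i + m + 1 ≠ 0 := by positivity
      rw [Finset.sum_range_succ, ih, ha m, hrec m]
      push_cast
      field_simp
      ring
  -- bound: p m * ((i+m) * (H+i+m)) ≤ i*(i+1)*(H+1)
  have hQb : ∀ m, p m * (((i:ℝ)+m) * ((H:ℝ)+i+m)) ≤ (i:ℝ)*((i:ℝ)+1)*((H:ℝ)+1) := by
    intro m
    induction m with
    | zero =>
      have hp0' : p 0 = 1 := by simp [hpdef]
      rw [hp0']
      push_cast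
      nlinarith [mul_nonneg (mul_nonneg hipos.le hipos.le) hHpos.le, mul_nonneg hipos.le hHpos.le]
    | succ m ih =>
      have hden : (0:ℝ) < (H:ℝ) + i + m + 1 := by positivity
      have hfeq : 1 - ((H:ℝ)+1)/((H:ℝ)+i+m+1) = ((i:ℝ)+m)/((H:ℝ)+i+m+1) := by
        field_simp
        ring
      rw [hrec m, hfeq]
      have key : p m * (((i:ℝ)+m)/((H:ℝ)+i+m+1)) * (((i:ℝ)+(m+1:ℕ)) * ((H:ℝ)+i+(m+1:ℕ)))
          = p m * (((i:ℝ)+m) * ((i:ℝ)+m+1)) := by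
        push_cast
        field_simp
        ring
      rw [key]
      have h1 : p m * (((i:ℝ)+m) * ((i:ℝ)+m+1)) ≤ p m * (((i:ℝ)+m) * ((H:ℝ)+i+m)) := by
        apply mul_le_mul_of_nonneg_left _ (hp0 m)
        apply mul_le_mul_of_nonneg_left _ (by linarith : (0:ℝ) ≤ (i:ℝ)+m)
        linarith
      linarith
  set C : ℝ := (i:ℝ)*((i:ℝ)+1)*((H:ℝ)+1) with hC
  have hQ0 : Filter.Tendsto (fun m : ℕ => p m * ((H:ℝ)+i+m)) Filter.atTop (nhds 0) := by
    apply squeeze_zero (fun m => mul_nonneg (hp0 m) (by positivity))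
      (g := fun m : ℕ => C / ((i:ℝ)+m))
    · intro m
      have him : (0:ℝ) < (i:ℝ)+m := by positivity
      rw [le_div_iff₀ him]
      calc p m * ((H:ℝ)+i+m) * ((i:ℝ)+m) = p m * (((i:ℝ)+m) * ((H:ℝ)+i+m)) := by ring
        _ ≤ C := hQb m
    · have h1 : Filter.Tendsto (fun m : ℕ => (i:ℝ)+m) Filter.atTop Filter.atTop :=
        Filter.tendsto_atTop_add_const_left _ _ tendsto_natCast_atTop_atTop
      exact h1.const_div_atTop C
  have hlim : Filter.Tendsto (fun m => ∑ n ∈ Finset.range m, etaWeight H (i+n) i)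
      Filter.atTop (nhds (1 + 1/(H:ℝ))) := by
    have h2 : Filter.Tendsto
        (fun m : ℕ => ((H:ℝ)+1)/H * (1 - p m * ((H:ℝ)+i+m)/((H:ℝ)+i)))
        Filter.atTop (nhds (((H:ℝ)+1)/H * (1 - 0/((H:ℝ)+i)))) := by
      exact (((hQ0.div_const _).const_sub 1).const_mul _)
    have h3 : ((H:ℝ)+1)/H * (1 - 0/((H:ℝ)+i)) = 1 + 1/(H:ℝ) := by
      field_simp
      ring
    rw [h3] at h2
    exact h2.congr (fun m => (hS m).symm)
  exact (hasSum_iff_tendsto_nat_of_nonneg hanneg _).mpr hlim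
end

section
/- The sum of the inverse square roots of the running counts satisfies ∑_{k=1}^{K} 1/√(N_k) ≤ 2 √( (card ι) · K ). -/
/-- Running count `N_k = #{j : 1 ≤ j ≤ k, x_j = x_k}`: the number of occurrences of the
value `x_k` among the first `k` terms of the sequence. -/
def runCount {ι : Type*} [DecidableEq ι] (x : ℕ → ι) (k : ℕ) : ℕ :=
  ((Finset.Icc 1 k).filter (fun j => x j = x k)).card

lemma sum_inv_sqrt_le (c : ℕ) :
    ∑ n ∈ Finset.Icc 1 c, 1 / Real.sqrt n ≤ 2 * Real.sqrt c := by
  induction c with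
  | zero => simp
  | succ c ih =>
    rw [Finset.sum_Icc_succ_top (by omega)]
    have h1 : Real.sqrt c ≤ Real.sqrt (c + 1) := by
      apply Real.sqrt_le_sqrt; linarith
    have h2 : (0:ℝ) < Real.sqrt (c + 1) := by
      apply Real.sqrt_pos.2; positivity
    have h3 : Real.sqrt (c+1) * Real.sqrt (c+1) = (c:ℝ)+1 :=
      Real.mul_self_sqrt (by positivity)
    have h4 : Real.sqrt c * Real.sqrt c = (c:ℝ) :=
      Real.mul_self_sqrt (by positivity)
    have key : 1 / Real.sqrt ((c:ℕ)+1 : ℕ) ≤ 2 * Real.sqrt ((c:ℕ)+1:ℕ) - 2 * Real.sqrt c := by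
      push_cast
      rw [div_le_iff₀ h2]
      nlinarith [Real.sqrt_nonneg (c:ℝ)]
    linarith
/-- Bound on accumulated count-based intrinsic-motivation bonuses:
`∑_{k=1}^K 1/√N_k ≤ 2 √((card ι) · K)`. -/
theorem sum_inv_sqrt_runCount_le {ι : Type*} [Fintype ι] [DecidableEq ι]
    (x : ℕ → ι) (K : ℕ) :
    ∑ k ∈ Finset.Icc 1 K, 1 / Real.sqrt (runCount x k) ≤
      2 * Real.sqrt ((Fintype.card ι : ℝ) * K) := by
  classical
  set S := Finset.Icc 1 K
  -- fiberwise decomposition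
  have hfib : ∑ k ∈ S, 1 / Real.sqrt (runCount x k)
      = ∑ i ∈ Finset.univ, ∑ k ∈ S.filter (fun k => x k = i), 1 / Real.sqrt (runCount x k) :=
    (Finset.sum_fiberwise S x (fun k => 1 / Real.sqrt (runCount x k))).symm
  -- per-fiber bound
  have hcard : ∑ i ∈ Finset.univ, ((S.filter (fun k => x k = i)).card : ℝ) = (K : ℝ) := by
    have := Finset.card_eq_sum_card_fiberwise (f := x) (s := S) (t := Finset.univ)
      (fun k _ => Finset.mem_univ _)
    rw_mod_cast [← this]
    simp [S]
  have hper : ∀ i : ι, ∑ k ∈ S.filter (fun k => x k = i), 1 / Real.sqrt (runCount x k)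
      ≤ 2 * Real.sqrt ((S.filter (fun k => x k = i)).card) := by
    intro i
    set F := S.filter (fun k => x k = i) with hF
    have hmem : ∀ k ∈ F, runCount x k ∈ Finset.Icc 1 F.card := by
      intro k hk
      simp only [hF, Finset.mem_filter, Finset.mem_Icc, S] at hk
      obtain ⟨⟨hk1, hkK⟩, hxk⟩ := hk
      rw [Finset.mem_Icc]
      constructor
      · have : k ∈ (Finset.Icc 1 k).filter (fun j => x j = x k) := by
          simp [Finset.mem_Icc, hk1]
        exact Finset.card_pos.2 ⟨k, this⟩
      · apply Finset.card_le_card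
        intro m hm
        rw [Finset.mem_filter, Finset.mem_Icc] at hm
        refine Finset.mem_filter.mpr ⟨Finset.mem_Icc.mpr ⟨hm.1.1, hm.1.2.trans hkK⟩, ?_⟩
        rw [hm.2, hxk]
    have hinj : Set.InjOn (runCount x) F := by
      have hmono : ∀ j ∈ F, ∀ k ∈ F, j < k → runCount x j < runCount x k := by
        intro j hj k hk hjk
        simp only [hF, Finset.mem_filter, Finset.mem_Icc, S] at hj hk
        apply Finset.card_lt_card
        rw [Finset.ssubset_iff_of_subset]
        · refine ⟨k, ?_, ?_⟩
          · simp [Finset.mem_Icc, hk.1.1]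
          · simp only [Finset.mem_filter, Finset.mem_Icc]
            rintro ⟨⟨_, h⟩, _⟩; omega
        · intro m hm
          rw [Finset.mem_filter, Finset.mem_Icc] at hm
          refine Finset.mem_filter.mpr ⟨Finset.mem_Icc.mpr ⟨hm.1.1, hm.1.2.trans hjk.le⟩, ?_⟩
          rw [hm.2, hj.2, hk.2]
      intro j hj k hk he
      rcases lt_trichotomy j k with h | h | h
      · exact absurd he (hmono j hj k hk h).ne
      · exact h
      · exact absurd he.symm (hmono k hk j hj h).ne
    calc ∑ k ∈ F, 1 / Real.sqrt (runCount x k)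
        = ∑ n ∈ F.image (runCount x), 1 / Real.sqrt n := by
          rw [Finset.sum_image (fun a ha b hb => hinj ha hb)]
      _ ≤ ∑ n ∈ Finset.Icc 1 F.card, 1 / Real.sqrt n := by
          apply Finset.sum_le_sum_of_subset_of_nonneg
          · intro n hn
            obtain ⟨k, hk, rfl⟩ := Finset.mem_image.1 hn
            exact hmem k hk
          · intro n _ _; positivity
      _ ≤ 2 * Real.sqrt F.card := sum_inv_sqrt_le F.card
  -- Cauchy-Schwarz
  have hCS : ∑ i ∈ Finset.univ, Real.sqrt ((S.filter (fun k => x k = i)).card)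
      ≤ Real.sqrt ((Fintype.card ι : ℝ) * K) := by
    set g : ι → ℝ := fun i => Real.sqrt ((S.filter (fun k => x k = i)).card)
    have hsq : (∑ i, g i)^2 ≤ (Fintype.card ι : ℝ) * ∑ i, (g i)^2 := by
      have := sq_sum_le_card_mul_sum_sq (s := (Finset.univ : Finset ι)) (f := g)
      simpa using this
    have hg2 : ∑ i, (g i)^2 = (K : ℝ) := by
      rw [← hcard]
      apply Finset.sum_congr rfl
      intro i _
      simp [g, Real.sq_sqrt]
    rw [hg2] at hsq
    have hnn : 0 ≤ ∑ i, g i := Finset.sum_nonneg fun i _ => Real.sqrt_nonneg _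
    nlinarith [Real.sq_sqrt (by positivity : (0:ℝ) ≤ (Fintype.card ι : ℝ) * K),
      Real.sqrt_nonneg ((Fintype.card ι : ℝ) * K)]
  calc ∑ k ∈ S, 1 / Real.sqrt (runCount x k)
      = ∑ i ∈ Finset.univ, ∑ k ∈ S.filter (fun k => x k = i), 1 / Real.sqrt (runCount x k) := hfib
    _ ≤ ∑ i ∈ Finset.univ, 2 * Real.sqrt ((S.filter (fun k => x k = i)).card) :=
        Finset.sum_le_sum fun i _ => hper i
    _ = 2 * ∑ i ∈ Finset.univ, Real.sqrt ((S.filter (fun k => x k = i)).card) := by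
        rw [Finset.mul_sum]
    _ ≤ 2 * Real.sqrt ((Fintype.card ι : ℝ) * K) := by linarith
end
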